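/- Let B be a uniformly convex Banach space, G a group, and ρ an isometric linear representation of G on B. If there exists ξ ∈ B with sup_{g∈G} ‖ξ − ρ(g)ξ‖ < ‖ξ‖, then B has a nonzero ρ(G)-invariant vector. -/

import Mathlib

/-- Chebyshev-center lemma: if `ρ` is an isometric linear representation of `G` on a
uniformly convex Banach space `B` and some `ξ` satisfies `sup_g ‖ξ − ρ(g)ξ‖ < ‖ξ‖`,
then `B` has a nonzero `ρ(G)`-invariant vector. -/
theorem nonzero_invariant_vector_of_small_orbit
    {B : Type} [NormedAddCommGroup B] [NormedSpace ℝ B] [UniformConvexSpace B]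
    [CompleteSpace B]
    {G : Type} [Group G] (ρ : G →* (B ≃ₗᵢ[ℝ] B))
    (ξ : B) (C : ℝ) (hC : C < ‖ξ‖)
    (h : ∀ g : G, ‖ξ - ρ g ξ‖ ≤ C) :
    ∃ η : B, η ≠ 0 ∧ ∀ g : G, ρ g η = η := by
  have hC0 : 0 ≤ C := by simpa using h 1
  have hξ0 : ξ ≠ 0 := by
    intro hh
    rw [hh, norm_zero] at hC
    linarith
  by_cases htriv : ∀ g : G, ρ g ξ = ξ
  · exact ⟨ξ, hξ0, htriv⟩
  push_neg at htriv
  obtain ⟨g₀, hg₀⟩ := htriv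
  -- the radius function
  set r : B → ℝ := fun x => ⨆ g : G, ‖x - ρ g ξ‖ with hrdef
  have hbdd : ∀ x : B, BddAbove (Set.range fun g : G => ‖x - ρ g ξ‖) := by
    intro x
    refine ⟨‖x - ξ‖ + C, ?_⟩
    rintro _ ⟨g, rfl⟩
    calc ‖x - ρ g ξ‖ ≤ ‖x - ξ‖ + ‖ξ - ρ g ξ‖ := by
          simpa using norm_add_le (x - ξ) (ξ - ρ g ξ)
      _ ≤ ‖x - ξ‖ + C := by linarith [h g]
  have h_le : ∀ (x : B) (g : G), ‖x - ρ g ξ‖ ≤ r x := fun x g => le_ciSup (hbdd x) g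
  have h_r_nonneg : ∀ x : B, 0 ≤ r x := fun x => le_trans (norm_nonneg _) (h_le x 1)
  have hbdd_below : BddBelow (Set.range r) := ⟨0, by rintro _ ⟨x, rfl⟩; exact h_r_nonneg x⟩
  set r₀ : ℝ := ⨅ x : B, r x with hr₀def
  have h_r₀_le : ∀ x : B, r₀ ≤ r x := fun x => ciInf_le hbdd_below x
  -- r₀ is positive
  have hr₀pos : 0 < r₀ := by
    have hc : 0 < ‖ξ - ρ g₀ ξ‖ := by
      rw [norm_pos_iff, sub_ne_zero]
      exact fun hh => hg₀ hh.symm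
    have : ∀ x : B, ‖ξ - ρ g₀ ξ‖ / 2 ≤ r x := by
      intro x
      have h1 := h_le x 1
      have h2 := h_le x g₀
      simp only [map_one] at h1
      have : ‖ξ - ρ g₀ ξ‖ ≤ ‖x - ξ‖ + ‖x - ρ g₀ ξ‖ := by
        have := norm_sub_le (x - ρ g₀ ξ) (x - ξ)
        simp only [sub_sub_sub_cancel_left] at this
        calc ‖ξ - ρ g₀ ξ‖ = ‖(x - ρ g₀ ξ) - (x - ξ)‖ := by rw [sub_sub_sub_cancel_left]
          _ ≤ ‖x - ρ g₀ ξ‖ + ‖x - ξ‖ := norm_sub_le _ _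
          _ = ‖x - ξ‖ + ‖x - ρ g₀ ξ‖ := by ring
      simp only [LinearIsometryEquiv.coe_one, id_eq] at h1
      linarith
    have := le_ciInf this
    linarith
  -- key uniform-convexity estimate
  have hkey : ∀ ε : ℝ, 0 < ε → ∃ θ : ℝ, 0 < θ ∧
      ∀ x y : B, r x ≤ r₀ + θ → r y ≤ r₀ + θ → ‖x - y‖ < ε := by
    intro ε hε
    obtain ⟨δ, hδ, hdelta⟩ :=
      exists_forall_closed_ball_dist_add_le_two_mul_sub B (half_pos hε) r₀
    refine ⟨min r₀ (δ/4), lt_min hr₀pos (by positivity), fun x y hx hy => ?_⟩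
    by_contra hcon
    push_neg at hcon
    set θ : ℝ := min r₀ (δ/4) with hθdef
    have hθr : θ ≤ r₀ := min_le_left _ _
    have hθδ : θ ≤ δ/4 := min_le_right _ _
    have hθpos : 0 < θ := lt_min hr₀pos (by positivity)
    have hden : (0:ℝ) < r₀ + θ := by linarith
    set t : ℝ := r₀ / (r₀ + θ) with htdef
    have ht0 : 0 < t := div_pos hr₀pos hden
    have htle : t ≤ 1 := by
      rw [div_le_one hden]; linarith
    have hthalf : (1:ℝ)/2 ≤ t := by
      rw [div_le_div_iff₀ (by norm_num) hden]; linarith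
    -- midpoint estimate for each g
    have hmid : ∀ g : G, ‖(2:ℝ)⁻¹ • (x + y) - ρ g ξ‖ ≤ r₀ + θ - δ/2 := by
      intro g
      set a : B := x - ρ g ξ with hadef
      set b : B := y - ρ g ξ with hbdef
      have ha : ‖t • a‖ ≤ r₀ := by
        rw [norm_smul, Real.norm_of_nonneg ht0.le]
        calc t * ‖a‖ ≤ t * (r₀ + θ) := by
              have := le_trans (h_le x g) hx
              exact mul_le_mul_of_nonneg_left this ht0.le
          _ = r₀ := by rw [htdef, div_mul_cancel₀ _ hden.ne']
      have hb : ‖t • b‖ ≤ r₀ := by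
        rw [norm_smul, Real.norm_of_nonneg ht0.le]
        calc t * ‖b‖ ≤ t * (r₀ + θ) := by
              have := le_trans (h_le y g) hy
              exact mul_le_mul_of_nonneg_left this ht0.le
          _ = r₀ := by rw [htdef, div_mul_cancel₀ _ hden.ne']
      have hab : ε/2 ≤ ‖t • a - t • b‖ := by
        rw [← smul_sub, norm_smul, Real.norm_of_nonneg ht0.le]
        have hab' : a - b = x - y := by rw [hadef, hbdef]; abel
        rw [hab']
        calc ε/2 = (1/2) * ε := by ring
          _ ≤ t * ‖x - y‖ := by
            exact mul_le_mul hthalf hcon hε.le ht0.le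
      have hsum := hdelta ha hb hab
      rw [← smul_add, norm_smul, Real.norm_of_nonneg ht0.le] at hsum
      -- t * ‖a + b‖ ≤ 2 * r₀ - δ
      have habn : ‖a + b‖ * r₀ ≤ (2 * r₀ - δ) * (r₀ + θ) := by
        have : t * ‖a + b‖ * (r₀ + θ) ≤ (2 * r₀ - δ) * (r₀ + θ) :=
          mul_le_mul_of_nonneg_right hsum hden.le
        calc ‖a + b‖ * r₀ = t * ‖a + b‖ * (r₀ + θ) := by
              rw [htdef, mul_comm (r₀ / (r₀ + θ)), mul_assoc, div_mul_cancel₀ _ hden.ne']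
          _ ≤ (2 * r₀ - δ) * (r₀ + θ) := this
      have hmeq : (2:ℝ)⁻¹ • (x + y) - ρ g ξ = (2:ℝ)⁻¹ • (a + b) := by
        rw [hadef, hbdef]
        module
      rw [hmeq, norm_smul]
      have : ‖((2:ℝ)⁻¹ : ℝ)‖ = (2:ℝ)⁻¹ := by norm_num
      rw [this]
      nlinarith [norm_nonneg (a + b), hθpos, hr₀pos, hδ]
    have hrm : r ((2:ℝ)⁻¹ • (x + y)) ≤ r₀ + θ - δ/2 := ciSup_le hmid
    have := h_r₀_le ((2:ℝ)⁻¹ • (x + y))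
    linarith
  -- minimizing sequence
  have hexists : ∀ n : ℕ, ∃ x : B, r x < r₀ + 1/(n+1) := by
    intro n
    apply exists_lt_of_ciInf_lt
    rw [← hr₀def]
    have : (0:ℝ) < 1/(n+1) := by positivity
    linarith
  choose u hu using hexists
  have hcauchy : CauchySeq u := by
    rw [Metric.cauchySeq_iff]
    intro ε hε
    obtain ⟨θ, hθ, hk⟩ := hkey ε hε
    obtain ⟨N, hN⟩ := exists_nat_one_div_lt hθ
    refine ⟨N, fun m hm n hn => ?_⟩
    have hbound : ∀ k : ℕ, N ≤ k → r (u k) ≤ r₀ + θ := by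
      intro k hk'
      have h1 : (1:ℝ)/(k+1) ≤ 1/(N+1) := by
        apply one_div_le_one_div_of_le (by positivity)
        have : (N:ℝ) ≤ (k:ℝ) := Nat.cast_le.mpr hk'
        linarith
      have := hu k
      linarith [hN.le]
    rw [dist_eq_norm]
    exact hk (u m) (u n) (hbound m hm) (hbound n hn)
  obtain ⟨η, hη⟩ := cauchySeq_tendsto_of_complete hcauchy
  -- r η = r₀
  have hrup : ∀ x y : B, r x ≤ r y + ‖x - y‖ := by
    intro x y
    apply ciSup_le
    intro g
    calc ‖x - ρ g ξ‖ = ‖(y - ρ g ξ) + (x - y)‖ := by rw [add_comm]; congr 1; abel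
      _ ≤ ‖y - ρ g ξ‖ + ‖x - y‖ := norm_add_le _ _
      _ ≤ r y + ‖x - y‖ := by linarith [h_le y g]
  have hrη : r η ≤ r₀ := by
    have hlim1 : Filter.Tendsto (fun n : ℕ => (1:ℝ)/(n+1)) Filter.atTop (nhds 0) :=
      tendsto_one_div_add_atTop_nhds_zero_nat
    have hlim2 : Filter.Tendsto (fun n : ℕ => ‖η - u n‖) Filter.atTop (nhds 0) := by
      have := (tendsto_iff_norm_sub_tendsto_zero).mp hη
      simpa [norm_sub_rev] using this
    have hlim : Filter.Tendsto (fun n : ℕ => r₀ + 1/(n+1) + ‖η - u n‖)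
        Filter.atTop (nhds r₀) := by
      have := (tendsto_const_nhds (x := r₀) (f := Filter.atTop (α := ℕ))).add hlim1 |>.add hlim2
      simpa using this
    apply ge_of_tendsto hlim
    filter_upwards with n
    have := hrup η (u n)
    linarith [hu n]
  have hrη' : r η = r₀ := le_antisymm hrη (h_r₀_le η)
  -- uniqueness of minimizer
  have huniq : ∀ x : B, r x ≤ r₀ → x = η := by
    intro x hx
    by_contra hne
    have hpos : 0 < ‖x - η‖ := by
      rw [norm_pos_iff, sub_ne_zero]; exact hne
    obtain ⟨θ, hθ, hk⟩ := hkey ‖x - η‖ hpos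
    have := hk x η (by linarith) (by linarith [hrη])
    linarith
  -- invariance of r
  have hinv : ∀ (g : G) (x : B), r (ρ g x) = r x := by
    intro g x
    have hpt : ∀ h' : G, ‖ρ g x - ρ h' ξ‖ = ‖x - ρ (g⁻¹ * h') ξ‖ := by
      intro h'
      have keymul : ∀ a b : G, ρ (a * b) ξ = ρ a (ρ b ξ) := by
        intro a b; rw [map_mul]; rfl
      have hx2 : ρ h' ξ = ρ g (ρ (g⁻¹ * h') ξ) := by
        rw [← keymul, mul_inv_cancel_left]
      have : ρ g x - ρ h' ξ = ρ g (x - ρ (g⁻¹ * h') ξ) := by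
        rw [map_sub, hx2]
      rw [this, LinearIsometryEquiv.norm_map]
    have hr1 : r (ρ g x) = ⨆ h' : G, ‖x - ρ (g⁻¹ * h') ξ‖ := by
      simp only [hrdef]
      exact iSup_congr hpt
    rw [hr1]
    have hsurj : Function.Surjective (fun h' : G => g⁻¹ * h') :=
      fun z => ⟨g * z, by group⟩
    have : (fun h' : G => ‖x - ρ (g⁻¹ * h') ξ‖)
        = (fun h' : G => ‖x - ρ h' ξ‖) ∘ (fun h' : G => g⁻¹ * h') := rfl
    rw [hrdef]
    show sSup (Set.range fun h' : G => ‖x - ρ (g⁻¹ * h') ξ‖)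
      = sSup (Set.range fun g' : G => ‖x - ρ g' ξ‖)
    rw [this, Set.range_comp, hsurj.range_eq, Set.image_univ]
  -- conclude
  refine ⟨η, ?_, ?_⟩
  · intro hzero
    have hr0 : ‖ξ‖ ≤ r₀ := by
      rw [← hrη', hzero]
      have := h_le 0 1
      simpa using this
    have hrξ : r ξ ≤ C := ciSup_le h
    linarith [h_r₀_le ξ]
  · intro g
    apply huniq
    rw [hinv g η, hrη']
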